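/- The rational functions f1(x) = 2x(x² - 3)(x² + 1)/((x² - 1)(x⁴ + 3)), f2(x) = -2x(x² - 1)(x² + 3)/((x² + 1)(x⁴ + 3)), f3(x) = x(x⁴ + 3)/((x² - 1)(x² + 1)) satisfy the polynomial identities f1²f2f3² + f1²f3 - 5f1f2f3 - f1f3² - 3f1 + 6f2 + 2f3 = 0 and f1f2²f3² + 5f1f2f3 - f2²f3 + f2f3² + 6f1 - 3f2 + 2f3 = 0 for all real x with x² ≠ 1. -/
import Mathlib
set_option maxHeartbeats 2000000

/-- Polynomial identities satisfied by the components of the rational solution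
with parameters `α1 = α2 = 2`, `α3 = -3`. -/
theorem sPIV_rational_solution_vertex_polynomial_identities
    (f1 f2 f3 : ℝ → ℝ)
    (hf1 : ∀ x, f1 x = 2 * x * (x ^ 2 - 3) * (x ^ 2 + 1) / ((x ^ 2 - 1) * (x ^ 4 + 3)))
    (hf2 : ∀ x, f2 x = -2 * x * (x ^ 2 - 1) * (x ^ 2 + 3) / ((x ^ 2 + 1) * (x ^ 4 + 3)))
    (hf3 : ∀ x, f3 x = x * (x ^ 4 + 3) / ((x ^ 2 - 1) * (x ^ 2 + 1))) :
    ∀ x : ℝ, x ^ 2 ≠ 1 →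
      (f1 x) ^ 2 * f2 x * (f3 x) ^ 2 + (f1 x) ^ 2 * f3 x - 5 * f1 x * f2 x * f3 x
        - f1 x * (f3 x) ^ 2 - 3 * f1 x + 6 * f2 x + 2 * f3 x = 0 ∧
      f1 x * (f2 x) ^ 2 * (f3 x) ^ 2 + 5 * f1 x * f2 x * f3 x - (f2 x) ^ 2 * f3 x
        + f2 x * (f3 x) ^ 2 + 6 * f1 x - 3 * f2 x + 2 * f3 x = 0 := by
  intro x hx
  have h1 : x ^ 2 - 1 ≠ 0 := sub_ne_zero.mpr hx
  have h2 : x ^ 2 + 1 ≠ 0 := by positivity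
  have h3 : x ^ 4 + 3 ≠ 0 := by positivity
  rw [hf1, hf2, hf3]
  constructor <;> (field_simp; ring)
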